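/- Let A : ℝ → Matrix (Fin k) (Fin k) ℝ be continuous and let X : ℝ → Matrix (Fin k) (Fin n) ℝ be differentiable with HasDerivAt X (A t * X t) t for every t ∈ ℝ. Then the rank of the matrix X(t) is independent of t: for all s, t ∈ ℝ, (X s).rank = (X t).rank. -/

import Mathlib

attribute [local instance] Matrix.normedAddCommGroup Matrix.normedSpace

open Set Matrix

/-- `M ↦ M *ᵥ c` as a linear map. -/
noncomputable def mulVecRight {k n : ℕ} (c : Fin n → ℝ) :
    Matrix (Fin k) (Fin n) ℝ →ₗ[ℝ] (Fin k → ℝ) where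
  toFun M := M *ᵥ c
  map_add' M N := Matrix.add_mulVec M N c
  map_smul' r M := Matrix.smul_mulVec r M c

lemma norm_mulVec_le' {k n : ℕ} (M : Matrix (Fin k) (Fin n) ℝ) (w : Fin n → ℝ) :
    ‖M *ᵥ w‖ ≤ (n : ℝ) * ‖M‖ * ‖w‖ := by
  have hM : (0:ℝ) ≤ ‖M‖ := norm_nonneg _
  have hw : (0:ℝ) ≤ ‖w‖ := norm_nonneg _
  have h : (0:ℝ) ≤ (n : ℝ) * ‖M‖ * ‖w‖ := by positivity
  rw [pi_norm_le_iff_of_nonneg h]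
  intro i
  calc ‖(M *ᵥ w) i‖ = ‖∑ j, M i j * w j‖ := rfl
    _ ≤ ∑ j, ‖M i j * w j‖ := norm_sum_le _ _
    _ ≤ ∑ _j : Fin n, ‖M‖ * ‖w‖ := by
        refine Finset.sum_le_sum fun j _ ↦ ?_
        rw [norm_mul]
        exact mul_le_mul (Matrix.norm_entry_le_entrywise_sup_norm M)
          (norm_le_pi_norm w j) (norm_nonneg _) hM
    _ = (n : ℝ) * ‖M‖ * ‖w‖ := by
        rw [Finset.sum_const, Finset.card_univ, Fintype.card_fin, nsmul_eq_mul, mul_assoc]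

/-- Key lemma: the kernel of `mulVec` is monotone in time. -/
lemma ker_le_ker {k n : ℕ} (A : ℝ → Matrix (Fin k) (Fin k) ℝ) (hA : Continuous A)
    (X : ℝ → Matrix (Fin k) (Fin n) ℝ)
    (hX : ∀ t : ℝ, HasDerivAt X (A t * X t) t) (s t : ℝ) :
    LinearMap.ker (X s).mulVecLin ≤ LinearMap.ker (X t).mulVecLin := by
  intro c hc
  simp only [LinearMap.mem_ker, mulVecLin_apply] at hc ⊢
  -- set up interval
  set a : ℝ := min s t - 1 with ha
  set b : ℝ := max s t + 1 with hb
  have hab : a ≤ b := by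
    have h1 : min s t ≤ max s t := le_trans (min_le_left _ _) (le_max_left _ _)
    simp only [ha, hb]; linarith
  -- clamp
  set π : ℝ → ℝ := fun τ => max a (min b τ) with hπ
  have hπc : Continuous π := continuous_const.max (continuous_const.min continuous_id)
  have hπmem : ∀ τ, π τ ∈ Icc a b := fun τ => ⟨le_max_left _ _,
    max_le (by linarith [min_le_left b τ, hab]) (min_le_left _ _)⟩
  have hπeq : ∀ τ ∈ Icc a b, π τ = τ := by
    intro τ hτ
    simp only [hπ]
    rw [min_eq_right hτ.2, max_eq_right hτ.1]
  set A' : ℝ → Matrix (Fin k) (Fin k) ℝ := fun τ => A (π τ) with hA'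
  -- bound on A' : from compactness
  obtain ⟨τ₀, _, hτ₀⟩ := isCompact_Icc.exists_isMaxOn (nonempty_Icc.mpr hab)
    (hA.norm.continuousOn (s := Icc a b))
  set B : ℝ := ‖A τ₀‖ with hB
  have hB0 : 0 ≤ B := norm_nonneg _
  have hA'B : ∀ τ, ‖A' τ‖ ≤ B := fun τ => hτ₀ (hπmem τ)
  -- the vector field
  set K : NNReal := ⟨(k : ℝ) * B, by positivity⟩ with hK
  set v : ℝ → (Fin k → ℝ) → (Fin k → ℝ) := fun τ y => A' τ *ᵥ y with hv
  have hlip : ∀ τ, LipschitzWith K (v τ) := by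
    intro τ
    apply LipschitzWith.of_dist_le_mul
    intro y z
    rw [dist_eq_norm, dist_eq_norm, ← Matrix.mulVec_sub]
    calc ‖A' τ *ᵥ (y - z)‖ ≤ (k : ℝ) * ‖A' τ‖ * ‖y - z‖ := norm_mulVec_le' _ _
      _ ≤ (K : ℝ) * ‖y - z‖ := by
          apply mul_le_mul_of_nonneg_right _ (norm_nonneg _)
          exact mul_le_mul_of_nonneg_left (hA'B τ) (by positivity)
  -- solution f
  set L : Matrix (Fin k) (Fin n) ℝ →L[ℝ] (Fin k → ℝ) :=
    LinearMap.toContinuousLinearMap (mulVecRight c) with hL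
  set f : ℝ → Fin k → ℝ := fun τ => X τ *ᵥ c with hf
  have hf' : ∀ τ ∈ Ioo a b, HasDerivAt f (v τ (f τ)) τ := by
    intro τ hτ
    have h1 : HasDerivAt (fun τ => L (X τ)) (L (A τ * X τ)) τ :=
      L.hasFDerivAt.comp_hasDerivAt τ (hX τ)
    have h2 : L (A τ * X τ) = v τ (f τ) := by
      simp only [hL, hv, hf, LinearMap.coe_toContinuousLinearMap', mulVecRight,
        LinearMap.coe_mk, AddHom.coe_mk, hA']
      rw [hπeq τ (Ioo_subset_Icc_self hτ), Matrix.mulVec_mulVec]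
    exact h2 ▸ h1
  have hg' : ∀ τ ∈ Ioo a b, HasDerivAt (fun _ : ℝ => (0 : Fin k → ℝ)) (v τ 0) τ := by
    intro τ _
    have : v τ 0 = 0 := by simp [hv, Matrix.mulVec_zero]
    rw [this]
    exact hasDerivAt_const _ _
  have hsmem : s ∈ Ioo a b := ⟨by simp only [ha]; linarith [min_le_left s t],
    by simp only [hb]; linarith [le_max_left s t]⟩
  have htmem : t ∈ Icc a b := ⟨by simp only [ha]; linarith [min_le_right s t],
    by simp only [hb]; linarith [le_max_right s t]⟩
  have hfc : ContinuousOn f (Icc a b) := by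
    apply Continuous.continuousOn
    have : Continuous X := by
      apply continuous_iff_continuousAt.mpr
      exact fun τ => (hX τ).continuousAt
    exact L.continuous.comp this
  have := ODE_solution_unique_of_mem_Icc (s := fun _ => (univ : Set (Fin k → ℝ)))
    (fun τ _ => (hlip τ).lipschitzOnWith) hsmem hfc hf' (fun _ _ => trivial)
    continuousOn_const hg' (fun _ _ => trivial) (by simpa [hf] using hc)
  exact this htmem

/-- if `X : ℝ → Matrix (Fin k) (Fin n) ℝ` solves the linear matrix ODE
`X′(t) = A(t) * X(t)` with continuous coefficient matrix `A`, then the rank of `X t`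
is independent of `t`. -/
theorem stmt12 {k n : ℕ} (A : ℝ → Matrix (Fin k) (Fin k) ℝ) (hA : Continuous A)
    (X : ℝ → Matrix (Fin k) (Fin n) ℝ)
    (hX : ∀ t : ℝ, HasDerivAt X (A t * X t) t) (s t : ℝ) :
    (X s).rank = (X t).rank := by
  have hker : LinearMap.ker (X s).mulVecLin = LinearMap.ker (X t).mulVecLin :=
    le_antisymm (ker_le_ker A hA X hX s t) (ker_le_ker A hA X hX t s)
  have h1 := LinearMap.finrank_range_add_finrank_ker (X s).mulVecLin
  have h2 := LinearMap.finrank_range_add_finrank_ker (X t).mulVecLin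
  rw [hker] at h1
  rw [Matrix.rank, Matrix.rank]
  omega
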